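/- Define g(ψ) = [1 + √(2π) ψ Φ(ψ) exp(ψ²/2)]^{-1} for ψ ≥ 0, where Φ is the standard normal CDF. Then g is continuous and strictly decreasing on [0,∞), g(0) = 1, and g(ψ) → 0 as ψ → ∞; hence for every α ∈ (0,1] there is a unique ψ ≥ 0 with g(ψ) = α. -/
import Mathlib


open Filter Set

noncomputable def stdNormalCDF (ψ : ℝ) : ℝ :=
  ∫ x in Set.Iic ψ, (Real.sqrt (2 * Real.pi))⁻¹ * Real.exp (-x ^ 2 / 2)

noncomputable def halfinWhitt (ψ : ℝ) : ℝ :=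
  (1 + Real.sqrt (2 * Real.pi) * ψ * stdNormalCDF ψ * Real.exp (ψ ^ 2 / 2))⁻¹

namespace HWaux

noncomputable def f (x : ℝ) : ℝ := (Real.sqrt (2 * Real.pi))⁻¹ * Real.exp (-x ^ 2 / 2)

lemma f_pos (x : ℝ) : 0 < f x := by
  unfold f
  positivity

lemma f_cont : Continuous f := by
  unfold f
  fun_prop

lemma f_integrable : MeasureTheory.Integrable f := by
  have h : MeasureTheory.Integrable (fun x : ℝ => Real.exp (-(1/2 : ℝ) * x ^ 2)) :=
    integrable_exp_neg_mul_sq (by norm_num)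
  have h2 := h.const_mul (Real.sqrt (2 * Real.pi))⁻¹
  refine h2.congr ?_
  filter_upwards with x
  unfold f
  ring_nf

lemma Phi_eq (ψ : ℝ) : stdNormalCDF ψ = stdNormalCDF 0 + ∫ x in (0:ℝ)..ψ, f x := by
  have := intervalIntegral.integral_Iic_sub_Iic (μ := MeasureTheory.volume)
    (f := f) f_integrable.integrableOn f_integrable.integrableOn (a := 0) (b := ψ)
  have e1 : stdNormalCDF ψ = ∫ x in Set.Iic ψ, f x := rfl
  have e0 : stdNormalCDF 0 = ∫ x in Set.Iic 0, f x := rfl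
  rw [e1, e0]
  linarith

lemma Phi_hasDerivAt (ψ : ℝ) : HasDerivAt stdNormalCDF (f ψ) ψ := by
  have h : HasDerivAt (fun u => stdNormalCDF 0 + ∫ x in (0:ℝ)..u, f x) (f ψ) ψ :=
    (HasDerivAt.const_add _ ((f_cont.integral_hasStrictDerivAt 0 ψ).hasDerivAt))
  exact h.congr_of_eventuallyEq (Filter.Eventually.of_forall fun u => Phi_eq u)

lemma Phi_cont : Continuous stdNormalCDF := by
  exact continuous_iff_continuousAt.2 fun x => (Phi_hasDerivAt x).continuousAt

lemma Phi_strictMono : StrictMono stdNormalCDF := by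
  apply strictMono_of_deriv_pos
  intro x
  rw [(Phi_hasDerivAt x).deriv]
  exact f_pos x

lemma Phi_pos (ψ : ℝ) : 0 < stdNormalCDF ψ := by
  have h1 : 0 ≤ stdNormalCDF (ψ - 1) := by
    unfold stdNormalCDF
    apply MeasureTheory.setIntegral_nonneg measurableSet_Iic
    intro x _
    positivity
  have h2 : stdNormalCDF (ψ - 1) < stdNormalCDF ψ := Phi_strictMono (by linarith)
  linarith

end HWaux

theorem halfinWhitt_properties :
    ContinuousOn halfinWhitt (Set.Ici 0) ∧
    StrictAntiOn halfinWhitt (Set.Ici 0) ∧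
    halfinWhitt 0 = 1 ∧
    Tendsto halfinWhitt atTop (nhds 0) ∧
    ∀ α : ℝ, 0 < α → α ≤ 1 → ∃! ψ : ℝ, 0 ≤ ψ ∧ halfinWhitt ψ = α := by
  have hcpos : 0 < Real.sqrt (2 * Real.pi) := Real.sqrt_pos.2 (by positivity)
  set c := Real.sqrt (2 * Real.pi) with hc
  have heq : halfinWhitt = fun ψ => (1 + c * ψ * stdNormalCDF ψ * Real.exp (ψ ^ 2 / 2))⁻¹ := rfl
  have hpos : ∀ ψ : ℝ, 0 ≤ ψ → 0 < 1 + c * ψ * stdNormalCDF ψ * Real.exp (ψ ^ 2 / 2) := by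
    intro ψ hψ
    have h1 := (HWaux.Phi_pos ψ).le
    have h2 := (Real.exp_pos (ψ ^ 2 / 2)).le
    nlinarith [mul_nonneg (mul_nonneg (mul_nonneg hcpos.le hψ) h1) h2]
  have hcont : Continuous (fun ψ => 1 + c * ψ * stdNormalCDF ψ * Real.exp (ψ ^ 2 / 2)) := by
    have := HWaux.Phi_cont
    fun_prop
  have hmono : ∀ a b : ℝ, 0 ≤ a → a < b →
      c * a * stdNormalCDF a * Real.exp (a ^ 2 / 2)
        < c * b * stdNormalCDF b * Real.exp (b ^ 2 / 2) := by
    intro a b ha hab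
    have hb : 0 < b := lt_of_le_of_lt ha hab
    have hPa := HWaux.Phi_pos a
    have hPb := HWaux.Phi_pos b
    have hPab : stdNormalCDF a < stdNormalCDF b := HWaux.Phi_strictMono hab
    have hEa : (0:ℝ) < Real.exp (a ^ 2 / 2) := Real.exp_pos _
    have hEab : Real.exp (a ^ 2 / 2) ≤ Real.exp (b ^ 2 / 2) := by
      apply Real.exp_le_exp.2
      nlinarith
    calc c * a * stdNormalCDF a * Real.exp (a ^ 2 / 2)
        ≤ c * b * stdNormalCDF a * Real.exp (a ^ 2 / 2) := by
          have h1 : c * a ≤ c * b := by nlinarith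
          exact mul_le_mul_of_nonneg_right (mul_le_mul_of_nonneg_right h1 hPa.le) hEa.le
      _ < c * b * stdNormalCDF b * Real.exp (a ^ 2 / 2) :=
          mul_lt_mul_of_pos_right (mul_lt_mul_of_pos_left hPab (mul_pos hcpos hb)) hEa
      _ ≤ c * b * stdNormalCDF b * Real.exp (b ^ 2 / 2) :=
          mul_le_mul_of_nonneg_left hEab (mul_nonneg (mul_pos hcpos hb).le hPb.le)
  have hanti : StrictAntiOn halfinWhitt (Set.Ici 0) := by
    intro a ha b hb hab
    rw [heq]
    exact inv_strictAnti₀ (hpos a ha) (by linarith [hmono a b ha hab])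
  have hContOn : ContinuousOn halfinWhitt (Set.Ici 0) := by
    rw [heq]
    exact ContinuousOn.inv₀ hcont.continuousOn fun ψ hψ => ne_of_gt (hpos ψ hψ)
  have h0 : halfinWhitt 0 = 1 := by
    rw [heq]
    simp
  have htend : Tendsto halfinWhitt atTop (nhds 0) := by
    rw [heq]
    apply Filter.Tendsto.inv_tendsto_atTop
    apply tendsto_atTop_mono' atTop
      (f₁ := fun ψ => 1 + c * stdNormalCDF 0 * ψ)
    · filter_upwards [eventually_ge_atTop (0:ℝ)] with ψ hψ
      have h1 : stdNormalCDF 0 ≤ stdNormalCDF ψ := HWaux.Phi_strictMono.monotone hψ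
      have h2 : (1:ℝ) ≤ Real.exp (ψ ^ 2 / 2) := Real.one_le_exp (by positivity)
      have h3 := HWaux.Phi_pos 0
      have h4 := HWaux.Phi_pos ψ
      have h5 : stdNormalCDF 0 ≤ stdNormalCDF ψ * Real.exp (ψ ^ 2 / 2) := by nlinarith
      nlinarith [mul_le_mul_of_nonneg_left h5 (mul_nonneg hcpos.le hψ)]
    · exact tendsto_atTop_add_const_left _ _
        (Tendsto.const_mul_atTop (mul_pos hcpos (HWaux.Phi_pos 0)) tendsto_id)
  refine ⟨hContOn, hanti, h0, htend, ?_⟩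
  intro α hα hα1
  obtain ⟨b, hb1, hb0⟩ :=
    ((htend.eventually_lt_const hα).and (eventually_ge_atTop (0:ℝ))).exists
  have hIcc : ContinuousOn halfinWhitt (Set.Icc 0 b) :=
    hContOn.mono Set.Icc_subset_Ici_self
  have hmem : α ∈ Set.Icc (halfinWhitt b) (halfinWhitt 0) := ⟨hb1.le, by rw [h0]; exact hα1⟩
  obtain ⟨ψ, hψmem, hψ⟩ := intermediate_value_Icc' hb0 hIcc hmem
  refine ⟨ψ, ⟨hψmem.1, hψ⟩, ?_⟩
  rintro y ⟨hy0, hyα⟩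
  exact hanti.injOn (Set.mem_Ici.2 hy0) (Set.mem_Ici.2 hψmem.1) (by rw [hyα, hψ])
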